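/- For every integer d ≥ 0, each finite graph G can be edge-decomposed into a (d−1)-degenerate subgraph D and a subgraph H which is either empty or has minimum degree at least d, such that every edge of D is incident with at most one vertex of H. -/

import Mathlib

open SimpleGraph

/-- The closed neighbourhood of an edge `e`: all edges of `G` sharing a vertex with `e`. -/
def ECN {V : Type*} (G : SimpleGraph V) (e : Sym2 V) : Set (Sym2 V) :=
  {f | f ∈ G.edgeSet ∧ ∃ w, w ∈ f ∧ w ∈ e}

/-- The open neighbourhood of an edge `e`. -/
def EON {V : Type*} (G : SimpleGraph V) (e : Sym2 V) : Set (Sym2 V) :=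
  ECN G e \ {e}

/-- `c` is a closed conflict-free edge colouring of `G` with `k` colours. -/
def ClosedCF {V : Type*} (G : SimpleGraph V) (c : Sym2 V → ℕ) (k : ℕ) : Prop :=
  (∀ e ∈ G.edgeSet, c e < k) ∧
  ∀ e ∈ G.edgeSet, ∃ α, ∃! f, f ∈ ECN G e ∧ c f = α

/-- `c` is an open conflict-free edge colouring of `G` with `k` colours. -/
def OpenCF {V : Type*} (G : SimpleGraph V) (c : Sym2 V → ℕ) (k : ℕ) : Prop :=
  (∀ e ∈ G.edgeSet, c e < k) ∧
  ∀ e ∈ G.edgeSet, (EON G e).Nonempty → ∃ α, ∃! f, f ∈ EON G e ∧ c f = α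

/-- `c` is a conflict-free edge colouring of `G` with `k` colours:
every non-isolated edge `e` has an edge `e'` in its open neighbourhood whose
colour appears on no other edge of the closed neighbourhood of `e`. -/
def ConflictFree {V : Type*} (G : SimpleGraph V) (c : Sym2 V → ℕ) (k : ℕ) : Prop :=
  (∀ e ∈ G.edgeSet, c e < k) ∧
  ∀ e ∈ G.edgeSet, (EON G e).Nonempty →
    ∃ e' ∈ EON G e, ∀ f ∈ ECN G e, c f = c e' → f = e'

/-- A partial edge colouring of `G` with `k` colours. -/
def PartialColouring {V : Type*} (G : SimpleGraph V) (c : Sym2 V → Option ℕ) (k : ℕ) : Prop :=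
  ∀ e α, c e = some α → e ∈ G.edgeSet ∧ α < k

/-- An edge `e` is satisfied by the partial colouring `c`. -/
def SatisfiedP {V : Type*} (G : SimpleGraph V) (c : Sym2 V → Option ℕ) (e : Sym2 V) : Prop :=
  ∃ e' ∈ EON G e, ∃ α, c e' = some α ∧ ∀ f ∈ ECN G e, c f = some α → f = e'

/-- Vertex `v` is incident with a uniquely coloured edge under partial colouring `c`. -/
def UniqueAt {V : Type*} (G : SimpleGraph V) (c : Sym2 V → Option ℕ) (v : V) : Prop :=
  ∃ e ∈ G.incidenceSet v, ∃ α, c e = some α ∧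
    ∀ f ∈ G.incidenceSet v, c f = some α → f = e

/-- `G` is `k`-degenerate: there is a vertex ordering in which every vertex
has at most `k` earlier neighbours. -/
def IsDegenerate {V : Type*} (G : SimpleGraph V) (k : ℕ) : Prop :=
  ∃ f : V ↪ ℕ, ∀ v, {u ∈ G.neighborSet v | f u < f v}.ncard ≤ k

/-- The open conflict-free chromatic index. -/
noncomputable def ocfIndex {V : Type*} (G : SimpleGraph V) : ℕ :=
  sInf {k | ∃ c, OpenCF G c k}

/-- The closed conflict-free chromatic index. -/
noncomputable def ccfIndex {V : Type*} (G : SimpleGraph V) : ℕ :=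
  sInf {k | ∃ c, ClosedCF G c k}

/-- The conflict-free chromatic index. -/
noncomputable def cfIndex {V : Type*} (G : SimpleGraph V) : ℕ :=
  sInf {k | ∃ c, ConflictFree G c k}


def stepSet {V : Type*} (G : SimpleGraph V) (d : ℕ) (A : Set V) : Set V :=
  {v ∈ A | d ≤ ((G.neighborSet v) ∩ A).ncard}

def peel {V : Type*} (G : SimpleGraph V) (d : ℕ) : ℕ → Set V
  | 0 => Set.univ
  | n + 1 => stepSet G d (peel G d n)

lemma peel_succ {V : Type*} (G : SimpleGraph V) (d n : ℕ) :
    peel G d (n+1) = stepSet G d (peel G d n) := rfl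

lemma peel_succ_subset {V : Type*} (G : SimpleGraph V) (d n : ℕ) :
    peel G d (n+1) ⊆ peel G d n := fun _ hv => hv.1

lemma peel_subset {V : Type*} (G : SimpleGraph V) (d : ℕ) {m n : ℕ} (h : m ≤ n) :
    peel G d n ⊆ peel G d m := by
  induction n with
  | zero => simp_all
  | succ k ih =>
    rcases Nat.lt_or_ge m (k+1) with h' | h'
    · exact (peel_succ_subset G d k).trans (ih (Nat.lt_succ_iff.mp h'))
    · have : m = k + 1 := le_antisymm h h'
      subst this; exact subset_rfl

lemma peel_stab {V : Type*} [Fintype V] (G : SimpleGraph V) (d : ℕ) :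
    peel G d (Fintype.card V + 1) = peel G d (Fintype.card V) := by
  set N := Fintype.card V with hN
  have key : ∀ n, peel G d (n+1) = peel G d n ∨ (peel G d (n+1)).ncard + (n+1) ≤ N := by
    intro n
    induction n with
    | zero =>
      by_cases h : peel G d 1 = peel G d 0
      · exact Or.inl h
      · right
        have hsub : peel G d 1 ⊂ peel G d 0 := (peel_succ_subset G d 0).ssubset_of_ne h
        have hlt := Set.ncard_lt_ncard hsub (Set.toFinite _)
        have h0 : (peel G d 0 : Set V).ncard = N := by
          show (Set.univ : Set V).ncard = N
          rw [Set.ncard_univ, Nat.card_eq_fintype_card]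
        show (peel G d 1).ncard + 1 ≤ N
        omega
    | succ k ih =>
      by_cases h : peel G d (k+2) = peel G d (k+1)
      · exact Or.inl h
      · right
        have hsub : peel G d (k+2) ⊂ peel G d (k+1) :=
          (peel_succ_subset G d (k+1)).ssubset_of_ne h
        have hlt := Set.ncard_lt_ncard hsub (Set.toFinite _)
        rcases ih with h1 | h1
        · exfalso
          apply h
          rw [peel_succ, h1, ← peel_succ]
          exact h1
        · show (peel G d (k+2)).ncard + (k+2) ≤ N
          omega
  rcases key N with h | h
  · exact h
  · omega

lemma core_deg {V : Type*} [Fintype V] (G : SimpleGraph V) (d : ℕ) (v : V)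
    (hv : v ∈ peel G d (Fintype.card V)) :
    d ≤ ((G.neighborSet v) ∩ peel G d (Fintype.card V)).ncard := by
  have hv' : v ∈ stepSet G d (peel G d (Fintype.card V)) := by
    rw [← peel_succ, peel_stab]; exact hv
  exact hv'.2

def restrictIn {V : Type*} (G : SimpleGraph V) (C : Set V) : SimpleGraph V where
  Adj u v := G.Adj u v ∧ u ∈ C ∧ v ∈ C
  symm := ⟨fun u v ⟨h, hu, hv⟩ => ⟨h.symm, hv, hu⟩⟩
  loopless := ⟨fun v h => G.loopless.irrefl v h.1⟩

def restrictOut {V : Type*} (G : SimpleGraph V) (C : Set V) : SimpleGraph V where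
  Adj u v := G.Adj u v ∧ ¬(u ∈ C ∧ v ∈ C)
  symm := ⟨fun u v ⟨h, hn⟩ => ⟨h.symm, fun ⟨a, b⟩ => hn ⟨b, a⟩⟩⟩
  loopless := ⟨fun v h => G.loopless.irrefl v h.1⟩

theorem stmt10 {V : Type*} [Fintype V] (G : SimpleGraph V) (d : ℕ) :
    ∃ D H : SimpleGraph V, D ≤ G ∧ H ≤ G ∧
      Disjoint D.edgeSet H.edgeSet ∧ D.edgeSet ∪ H.edgeSet = G.edgeSet ∧
      IsDegenerate D (d - 1) ∧
      (∀ v ∈ H.support, d ≤ (H.neighborSet v).ncard) ∧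
      (∀ u v, D.Adj u v → ¬(u ∈ H.support ∧ v ∈ H.support)) := by
  classical
  set N := Fintype.card V with hNdef
  set C : Set V := peel G d N with hCdef
  refine ⟨restrictOut G C, restrictIn G C, fun u v h => h.1, fun u v h => h.1,
    ?_, ?_, ?_, ?_, ?_⟩
  · rw [Set.disjoint_left]
    intro e heD heH
    induction e using Sym2.ind with
    | _ u v =>
      rw [mem_edgeSet] at heD heH
      exact heD.2 ⟨heH.2.1, heH.2.2⟩
  · ext e
    induction e using Sym2.ind with
    | _ u v =>
      simp only [Set.mem_union, mem_edgeSet]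
      constructor
      · rintro (h | h) <;> exact h.1
      · intro h
        by_cases hc : u ∈ C ∧ v ∈ C
        · exact Or.inr ⟨h, hc.1, hc.2⟩
        · exact Or.inl ⟨h, hc⟩
  · -- degeneracy
    set ρ : V → ℕ := fun v => sInf {n | v ∉ peel G d (n + 1)} with hρ
    set key : V → ℕ := fun v => if v ∈ C then 0 else N - ρ v with hkey
    set g : V → ℕ := fun v => (Fintype.equivFin V v : ℕ) with hg
    set f : V → ℕ := fun v => key v * N + g v with hf
    have hgN : ∀ v, g v < N := fun v => (Fintype.equivFin V v).isLt
    have hginj : Function.Injective g := fun a b h =>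
      (Fintype.equivFin V).injective (Fin.val_injective h)
    have hNpos : ∀ (v : V), 0 < N := fun v => @Fintype.card_pos V _ ⟨v⟩
    have hne : ∀ v, v ∉ C → (N - 1) ∈ {n | v ∉ peel G d (n + 1)} := by
      intro v hv
      show v ∉ peel G d (N - 1 + 1)
      rw [Nat.sub_add_cancel (hNpos v)]
      exact hv
    have hρle : ∀ v, v ∉ C → ρ v ≤ N - 1 := fun v hv => Nat.sInf_le (hne v hv)
    have hmem : ∀ v, v ∉ C → v ∈ peel G d (ρ v) := by
      intro v hv
      rcases Nat.eq_zero_or_pos (ρ v) with h0 | hpos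
      · rw [h0]; trivial
      · obtain ⟨k, hk⟩ := Nat.exists_eq_succ_of_ne_zero hpos.ne'
        rw [hk]
        by_contra hcon
        have hle : ρ v ≤ k := Nat.sInf_le hcon
        omega
    have hnotmem : ∀ v, v ∉ C → v ∉ peel G d (ρ v + 1) := fun v hv =>
      Nat.sInf_mem ⟨N - 1, hne v hv⟩
    have hdeg : ∀ v, v ∉ C → ((G.neighborSet v) ∩ peel G d (ρ v)).ncard < d := by
      intro v hv
      by_contra hcon
      exact hnotmem v hv ⟨hmem v hv, le_of_not_gt hcon⟩
    have hkeypos : ∀ v, v ∉ C → 1 ≤ key v := by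
      intro v hv
      have h1 := hρle v hv
      have h2 := hNpos v
      simp only [hkey, if_neg hv]
      omega
    have hkeyC : ∀ v, v ∈ C → key v = 0 := fun v hv => by simp [hkey, hv]
    have hdiv : ∀ v : V, f v / N = key v := by
      intro v
      show (key v * N + g v) / N = key v
      rw [Nat.mul_comm, Nat.mul_add_div (hNpos v), Nat.div_eq_of_lt (hgN v), Nat.add_zero]
    have hfinj : Function.Injective f := by
      intro a b h
      have h1 : key a = key b := by rw [← hdiv a, ← hdiv b, h]
      apply hginj
      have h2 : key a * N + g a = key b * N + g b := h
      rw [h1] at h2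
      omega
    refine ⟨⟨f, hfinj⟩, ?_⟩
    intro v
    simp only [Function.Embedding.coeFn_mk]
    by_cases hv : v ∈ C
    · have hempty : {u ∈ (restrictOut G C).neighborSet v | f u < f v} = ∅ := by
        ext u
        simp only [Set.mem_setOf_eq, Set.mem_empty_iff_false, iff_false, not_and]
        intro hu hlt
        rw [SimpleGraph.mem_neighborSet] at hu
        have huC : u ∉ C := fun h => hu.2 ⟨hv, h⟩
        have h1 : 1 ≤ key u := hkeypos u huC
        have h2 : key v = 0 := hkeyC v hv
        have h3 : N ≤ key u * N := Nat.le_mul_of_pos_left N h1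
        have h4 : f v = g v := by simp only [hf, h2]; omega
        have h5 : g v < N := hgN v
        have h6 : key u * N + g u = f u := rfl
        omega
      rw [hempty, Set.ncard_empty]
      exact Nat.zero_le _
    · have hsub : {u ∈ (restrictOut G C).neighborSet v | f u < f v} ⊆
          (G.neighborSet v) ∩ peel G d (ρ v) := by
        rintro u ⟨hu, hlt⟩
        rw [SimpleGraph.mem_neighborSet] at hu
        refine ⟨hu.1, ?_⟩
        by_cases huC : u ∈ C
        · exact peel_subset G d (le_trans (hρle v hv) (Nat.sub_le N 1)) huC
        · have hku : key u ≤ key v := by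
            have h : f u / N ≤ f v / N := Nat.div_le_div_right (le_of_lt hlt)
            rwa [hdiv u, hdiv v] at h
          have hρvu : ρ v ≤ ρ u := by
            have h1 := hρle v hv
            have h2 := hρle u huC
            have h3 := hNpos v
            simp only [hkey, if_neg hv, if_neg huC] at hku
            omega
          exact peel_subset G d hρvu (hmem u huC)
      have hcard := Set.ncard_le_ncard hsub (Set.toFinite _)
      have hlt := hdeg v hv
      omega
  · intro v hv
    rw [SimpleGraph.mem_support] at hv
    obtain ⟨w, hw⟩ := hv
    have hvC : v ∈ C := hw.2.1
    have heq : (restrictIn G C).neighborSet v = (G.neighborSet v) ∩ C := by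
      ext u
      simp only [SimpleGraph.mem_neighborSet, Set.mem_inter_iff]
      constructor
      · rintro ⟨h, -, hu⟩; exact ⟨h, hu⟩
      · rintro ⟨h, hu⟩; exact ⟨h, hvC, hu⟩
    rw [heq]
    exact core_deg G d v hvC
  · rintro u v huv ⟨hu, hv⟩
    apply huv.2
    rw [SimpleGraph.mem_support] at hu hv
    obtain ⟨_, hu⟩ := hu
    obtain ⟨_, hv⟩ := hv
    exact ⟨hu.2.1, hv.2.1⟩
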